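/- If x_i ∈ E and y_i ∈ F are the extremal vectors defining hyperbolic principal angles between E, F ∈ X_p, then they form biorthogonal bases: B_p(x_i, y_j) = 0 for i ≠ j, and moreover P_F(x_i) = c_i y_i and P_E(y_i) = c_i x_i. -/

import Mathlib

open scoped RealInnerProductSpace

/-- Extremal biorthogonal system defining the hyperbolic principal angles
between two subspaces `E, F` relative to the form `B(x, y) = ⟪x, Φ y⟫`:
`x i ∈ E` and `y i ∈ F` are `B`-unit vectors, `B`-orthogonal to the previous
ones, chosen to maximize `B (x, y)`; `c i = B (x i, y i)`. -/
def ExtremalSystem {H : Type*} [NormedAddCommGroup H] [InnerProductSpace ℝ H]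
    (Φ : H →L[ℝ] H) (p : ℕ) (E F : Submodule ℝ H) (x y : Fin p → H) : Prop :=
  (∀ i, x i ∈ E) ∧ (∀ i, y i ∈ F) ∧
  (∀ i, ⟪x i, Φ (x i)⟫ = 1) ∧ (∀ i, ⟪y i, Φ (y i)⟫ = 1) ∧
  (∀ i j, i ≠ j → ⟪x i, Φ (x j)⟫ = 0) ∧ (∀ i j, i ≠ j → ⟪y i, Φ (y j)⟫ = 0) ∧
  (∀ i : Fin p, ∀ u ∈ E, ∀ v ∈ F, ⟪u, Φ u⟫ = 1 → ⟪v, Φ v⟫ = 1 →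
    (∀ j, j < i → ⟪u, Φ (x j)⟫ = 0) → (∀ j, j < i → ⟪v, Φ (y j)⟫ = 0) →
    ⟪u, Φ v⟫ ≤ ⟪x i, Φ (y i)⟫)

/-- Auxiliary: if `c + t*a ≤ c * sqrt (1+t²)` for all `t`, with `c ≥ 0`, then `a = 0`. -/
lemma key_zero (c a : ℝ) (hc : 0 ≤ c)
    (h : ∀ t : ℝ, c + t * a ≤ c * Real.sqrt (1 + t ^ 2)) : a = 0 := by
  have h2 : ∀ t : ℝ, t * a ≤ c * t ^ 2 := by
    intro t
    have hs := Real.sq_sqrt (by positivity : (0:ℝ) ≤ 1 + t ^ 2)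
    have hs0 := Real.sqrt_nonneg (1 + t ^ 2)
    nlinarith [h t, sq_nonneg (Real.sqrt (1 + t ^ 2) - 1)]
  have hc1 : (0:ℝ) < c + 1 := by linarith
  have h3 := h2 (a / (c + 1))
  have h5 := mul_le_mul_of_nonneg_right h3 (le_of_lt (mul_pos hc1 hc1))
  have l : a / (c + 1) * a * ((c + 1) * (c + 1)) = a ^ 2 * (c + 1) := by
    field_simp
  have r : c * (a / (c + 1)) ^ 2 * ((c + 1) * (c + 1)) = c * a ^ 2 := by
    rw [div_pow, ← sq (c + 1), mul_assoc,
      div_mul_cancel₀ _ (by positivity : ((c:ℝ) + 1) ^ 2 ≠ 0)]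
  rw [l, r] at h5
  have hsq : a ^ 2 = 0 := le_antisymm (by nlinarith) (sq_nonneg a)
  exact pow_eq_zero_iff (by norm_num : (2:ℕ) ≠ 0) |>.1 hsq

/-- The extremal vectors `x i ∈ E`, `y i ∈ F` defining the hyperbolic principal
angles form biorthogonal bases: `B (x i, y j) = 0` for `i ≠ j`, and moreover
`P_F (x i) = c i • y i` and `P_E (y i) = c i • x i`. -/
theorem stmt5 {H : Type*} [NormedAddCommGroup H] [InnerProductSpace ℝ H]
    [CompleteSpace H] [TopologicalSpace.SeparableSpace H]
    (p : ℕ) (E₀ : Submodule ℝ H) (hE₀ : Module.finrank ℝ E₀ = p)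
    (Φ : H →L[ℝ] H)
    (hΦ₁ : ∀ v ∈ E₀, Φ v = v) (hΦ₂ : ∀ v ∈ E₀ᗮ, Φ v = -v)
    (E F : Submodule ℝ H)
    (hEr : Module.finrank ℝ E = p) (hFr : Module.finrank ℝ F = p)
    (hEpos : ∀ v ∈ E, v ≠ 0 → 0 < ⟪v, Φ v⟫)
    (hFpos : ∀ v ∈ F, v ≠ 0 → 0 < ⟪v, Φ v⟫)
    (PE PF : H →ₗ[ℝ] H)
    (hPE₁ : ∀ v ∈ E, PE v = v)
    (hPE₂ : ∀ v : H, (∀ w ∈ E, ⟪v, Φ w⟫ = 0) → PE v = 0)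
    (hPF₁ : ∀ v ∈ F, PF v = v)
    (hPF₂ : ∀ v : H, (∀ w ∈ F, ⟪v, Φ w⟫ = 0) → PF v = 0)
    (x y : Fin p → H) (hsys : ExtremalSystem Φ p E F x y)
    (c : Fin p → ℝ) (hc : ∀ i, c i = ⟪x i, Φ (y i)⟫) :
    (∀ i j, i ≠ j → ⟪x i, Φ (y j)⟫ = 0) ∧
    (∀ i, PF (x i) = c i • y i) ∧
    (∀ i, PE (y i) = c i • x i) := by
  obtain ⟨hxE, hyF, hxx1, hyy1, hxx0, hyy0, hmax⟩ := hsys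
  rcases Nat.eq_zero_or_pos p with hp | hp
  · subst hp
    exact ⟨fun i => i.elim0, fun i => i.elim0, fun i => i.elim0⟩
  haveI : FiniteDimensional ℝ E₀ := FiniteDimensional.of_finrank_pos (hE₀ ▸ hp)
  haveI : FiniteDimensional ℝ E := FiniteDimensional.of_finrank_pos (hEr ▸ hp)
  haveI : FiniteDimensional ℝ F := FiniteDimensional.of_finrank_pos (hFr ▸ hp)
  -- symmetry of the form
  have hΦv : ∀ v : H, Φ v = (2:ℝ) • ((E₀.orthogonalProjectionOnto v : H)) - v := by
    intro v
    have hmem := Submodule.sub_starProjection_mem_orthogonal (K := E₀) v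
    have h1 : Φ ((E₀.orthogonalProjectionOnto v : H)) = (E₀.orthogonalProjectionOnto v : H) :=
      hΦ₁ _ (E₀.orthogonalProjectionOnto v).2
    have h2 : Φ (v - (E₀.orthogonalProjectionOnto v : H)) = -(v - (E₀.orthogonalProjectionOnto v : H)) :=
      hΦ₂ _ hmem
    have : Φ v = Φ ((E₀.orthogonalProjectionOnto v : H)) + Φ (v - (E₀.orthogonalProjectionOnto v : H)) := by
      rw [← map_add]; congr 1; abel
    rw [this, h1, h2]; module
  have hsymm : ∀ u w : H, ⟪u, Φ w⟫ = ⟪w, Φ u⟫ := by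
    intro u w
    have hu := Submodule.sub_starProjection_mem_orthogonal (K := E₀) u
    have hw := Submodule.sub_starProjection_mem_orthogonal (K := E₀) w
    have key : ∀ a b : H, ⟪a, (E₀.orthogonalProjectionOnto b : H)⟫ =
        ⟪(E₀.orthogonalProjectionOnto a : H), (E₀.orthogonalProjectionOnto b : H)⟫ := by
      intro a b
      have ha := Submodule.sub_starProjection_mem_orthogonal (K := E₀) a
      have h0 : ⟪(E₀.orthogonalProjectionOnto b : H), a - (E₀.orthogonalProjectionOnto a : H)⟫ = 0 :=
        ha _ (E₀.orthogonalProjectionOnto b).2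
      rw [inner_sub_right] at h0
      calc ⟪a, (E₀.orthogonalProjectionOnto b : H)⟫
          = ⟪(E₀.orthogonalProjectionOnto b : H), a⟫ := real_inner_comm _ _
        _ = ⟪(E₀.orthogonalProjectionOnto b : H), (E₀.orthogonalProjectionOnto a : H)⟫ := by linarith
        _ = ⟪(E₀.orthogonalProjectionOnto a : H), (E₀.orthogonalProjectionOnto b : H)⟫ :=
            real_inner_comm _ _
    rw [hΦv u, hΦv w]
    rw [inner_sub_right, inner_sub_right, real_inner_smul_right, real_inner_smul_right]
    have k1 := key u w
    have k2 := key w u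
    have k3 := real_inner_comm u w
    have k4 := real_inner_comm (E₀.orthogonalProjectionOnto u : H) (E₀.orthogonalProjectionOnto w : H)
    linarith
  -- nonnegativity of c
  have hc0 : ∀ i, 0 ≤ c i := by
    intro i
    have hneg : ⟪-(y i), Φ (-(y i))⟫ = 1 := by
      rw [map_neg, inner_neg_neg]; exact hyy1 i
    have := hmax i (x i) (hxE i) (-(y i)) (neg_mem (hyF i)) (hxx1 i) hneg
      (fun j hj => hxx0 i j hj.ne')
      (fun j hj => by rw [inner_neg_left, hyy0 i j hj.ne', neg_zero])
    rw [map_neg, inner_neg_right] at this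
    rw [hc]; linarith
  -- biorthogonality
  have biorth : ∀ i j, i ≠ j → ⟪x i, Φ (y j)⟫ = 0 := by
    intro i j hij
    rcases lt_or_gt_of_ne hij with h | h
    · -- i < j : perturb v around y i with y j
      refine key_zero (c i) _ (hc0 i) ?_
      intro t
      set s := Real.sqrt (1 + t ^ 2) with hsdef
      have hs2 : s ^ 2 = 1 + t ^ 2 := Real.sq_sqrt (by positivity)
      have hs0 : 0 < s := Real.sqrt_pos.2 (by positivity)
      have e3 : ⟪y i, Φ (y j)⟫ = 0 := hyy0 i j h.ne
      have e4 : ⟪y j, Φ (y i)⟫ = 0 := hyy0 j i h.ne'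
      have hvF : s⁻¹ • (y i + t • y j) ∈ F :=
        Submodule.smul_mem _ _ (Submodule.add_mem _ (hyF i) (Submodule.smul_mem _ _ (hyF j)))
      have hv1 : ⟪s⁻¹ • (y i + t • y j), Φ (s⁻¹ • (y i + t • y j))⟫ = 1 := by
        simp only [map_smul, map_add, inner_smul_left, inner_smul_right, inner_add_left,
          inner_add_right, RCLike.conj_to_real, hyy1 i, hyy1 j, e3, e4]
        have hss : s⁻¹ * s⁻¹ * (1 + t ^ 2) = 1 := by
          rw [← hs2]; field_simp
        nlinarith [hss]
      have hvorth : ∀ k, k < i → ⟪s⁻¹ • (y i + t • y j), Φ (y k)⟫ = 0 := by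
        intro k hk
        have ek1 : ⟪y i, Φ (y k)⟫ = 0 := hyy0 i k hk.ne'
        have ek2 : ⟪y j, Φ (y k)⟫ = 0 := hyy0 j k (hk.trans h).ne'
        simp [inner_smul_left, inner_add_left, ek1, ek2]
      have hle := hmax i (x i) (hxE i) _ hvF (hxx1 i) hv1
        (fun k hk => hxx0 i k hk.ne') hvorth
      have hexp : ⟪x i, Φ (s⁻¹ • (y i + t • y j))⟫
          = s⁻¹ * (c i + t * ⟪x i, Φ (y j)⟫) := by
        simp only [map_smul, map_add, inner_smul_right, inner_add_right, hc]
        try ring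
      rw [hexp, ← hc i] at hle
      exact ((inv_mul_le_iff₀ hs0).1 hle).trans_eq (mul_comm _ _)
    · -- j < i : perturb u around x j with x i
      refine key_zero (c j) _ (hc0 j) ?_
      intro t
      set s := Real.sqrt (1 + t ^ 2) with hsdef
      have hs2 : s ^ 2 = 1 + t ^ 2 := Real.sq_sqrt (by positivity)
      have hs0 : 0 < s := Real.sqrt_pos.2 (by positivity)
      have e3 : ⟪x j, Φ (x i)⟫ = 0 := hxx0 j i h.ne
      have e4 : ⟪x i, Φ (x j)⟫ = 0 := hxx0 i j h.ne'
      have huE : s⁻¹ • (x j + t • x i) ∈ E :=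
        Submodule.smul_mem _ _ (Submodule.add_mem _ (hxE j) (Submodule.smul_mem _ _ (hxE i)))
      have hu1 : ⟪s⁻¹ • (x j + t • x i), Φ (s⁻¹ • (x j + t • x i))⟫ = 1 := by
        simp only [map_smul, map_add, inner_smul_left, inner_smul_right, inner_add_left,
          inner_add_right, RCLike.conj_to_real, hxx1 i, hxx1 j, e3, e4]
        have hss : s⁻¹ * s⁻¹ * (1 + t ^ 2) = 1 := by
          rw [← hs2]; field_simp
        nlinarith [hss]
      have huorth : ∀ k, k < j → ⟪s⁻¹ • (x j + t • x i), Φ (x k)⟫ = 0 := by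
        intro k hk
        have ek1 : ⟪x j, Φ (x k)⟫ = 0 := hxx0 j k hk.ne'
        have ek2 : ⟪x i, Φ (x k)⟫ = 0 := hxx0 i k (hk.trans h).ne'
        simp [inner_smul_left, inner_add_left, ek1, ek2]
      have hle := hmax j _ huE (y j) (hyF j) hu1 (hyy1 j) huorth
        (fun k hk => hyy0 j k hk.ne')
      have hexp : ⟪s⁻¹ • (x j + t • x i), Φ (y j)⟫
          = s⁻¹ * (c j + t * ⟪x i, Φ (y j)⟫) := by
        simp only [inner_smul_left, inner_add_left, RCLike.conj_to_real, hc]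
        try ring
      rw [hexp, ← hc j] at hle
      exact ((inv_mul_le_iff₀ hs0).1 hle).trans_eq (mul_comm _ _)
  -- linear independence and span
  have hxind : LinearIndependent ℝ x := by
    rw [Fintype.linearIndependent_iff]
    intro g hg k
    have hcomp : ⟪x k, Φ (∑ j, g j • x j)⟫ = g k := by
      rw [map_sum, inner_sum]
      rw [Finset.sum_eq_single k]
      · simp [map_smul, inner_smul_right, hxx1 k]
      · intro b _ hb
        simp [map_smul, inner_smul_right, hxx0 k b (Ne.symm hb)]
      · simp
    rw [hg] at hcomp
    simpa using hcomp.symm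
  have hyind : LinearIndependent ℝ y := by
    rw [Fintype.linearIndependent_iff]
    intro g hg k
    have hcomp : ⟪y k, Φ (∑ j, g j • y j)⟫ = g k := by
      rw [map_sum, inner_sum]
      rw [Finset.sum_eq_single k]
      · simp [map_smul, inner_smul_right, hyy1 k]
      · intro b _ hb
        simp [map_smul, inner_smul_right, hyy0 k b (Ne.symm hb)]
      · simp
    rw [hg] at hcomp
    simpa using hcomp.symm
  have hspanx : Submodule.span ℝ (Set.range x) = E := by
    apply Submodule.eq_of_le_of_finrank_le
      (Submodule.span_le.2 (Set.range_subset_iff.2 hxE))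
    rw [finrank_span_eq_card hxind, Fintype.card_fin, hEr]
  have hspany : Submodule.span ℝ (Set.range y) = F := by
    apply Submodule.eq_of_le_of_finrank_le
      (Submodule.span_le.2 (Set.range_subset_iff.2 hyF))
    rw [finrank_span_eq_card hyind, Fintype.card_fin, hFr]
  refine ⟨biorth, ?_, ?_⟩
  · intro i
    have h0 : PF (x i - c i • y i) = 0 := by
      apply hPF₂
      intro w hw
      rw [← hspany] at hw
      induction hw using Submodule.span_induction with
      | mem w hw =>
        obtain ⟨j, rfl⟩ := hw
        rw [inner_sub_left, real_inner_smul_left]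
        by_cases hji : j = i
        · subst hji
          rw [← hc j, hyy1 j]; ring
        · rw [biorth i j (Ne.symm hji), hyy0 i j (Ne.symm hji)]; ring
      | zero => simp
      | add w₁ w₂ _ _ h1 h2 => rw [map_add, inner_add_right, h1, h2, add_zero]
      | smul a w _ h1 => rw [map_smul, real_inner_smul_right, h1, mul_zero]
    have hyPF : PF (y i) = y i := hPF₁ _ (hyF i)
    have : PF (x i) - c i • PF (y i) = 0 := by
      rw [← map_smul, ← map_sub]; exact h0
    rw [hyPF] at this
    exact sub_eq_zero.1 this
  · intro i
    have h0 : PE (y i - c i • x i) = 0 := by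
      apply hPE₂
      intro w hw
      rw [← hspanx] at hw
      induction hw using Submodule.span_induction with
      | mem w hw =>
        obtain ⟨j, rfl⟩ := hw
        rw [inner_sub_left, real_inner_smul_left, hsymm (y i) (x j)]
        by_cases hji : j = i
        · subst hji
          rw [← hc j, hxx1 j]; ring
        · rw [biorth j i hji, hxx0 i j (Ne.symm hji)]; ring
      | zero => simp
      | add w₁ w₂ _ _ h1 h2 => rw [map_add, inner_add_right, h1, h2, add_zero]
      | smul a w _ h1 => rw [map_smul, real_inner_smul_right, h1, mul_zero]
    have hxPE : PE (x i) = x i := hPE₁ _ (hxE i)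
    have : PE (y i) - c i • PE (x i) = 0 := by
      rw [← map_smul, ← map_sub]; exact h0
    rw [hxPE] at this
    exact sub_eq_zero.1 this
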